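/- Let f : ℝ → ℝ be continuously differentiable and strictly concave on [0,∞), bounded above, with f(0) = 0 and f'(0) > r > 0, and let x̄⁰ > 0 be the unique positive solution of f(x) = r·x. Let 0 < T̄ < T and let x : [0,T] → (0,∞) be a continuous solution of the closed-reactor dynamics x' = f(x) − r·x on (0,T̄) and x' = −r·x on (T̄,T). If x(0) ≥ x̄⁰ then x(T) < x(0). -/

import Mathlib

/-- Above the positive equilibrium, the net day growth rate is negative:
for `y > x̄⁰` we have `f y < r y`. -/
lemma key_above_equilibrium
    (f : ℝ → ℝ) (r xbar0 : ℝ)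
    (hdiff : ∀ y ∈ Set.Ici (0 : ℝ), DifferentiableAt ℝ f y)
    (hconc : StrictAntiOn (deriv f) (Set.Ici (0 : ℝ)))
    (hf0 : f 0 = 0)
    (hxbar0_pos : 0 < xbar0)
    (hxbar0 : f xbar0 = r * xbar0) :
    ∀ y, xbar0 < y → f y < r * y := by
  have hcont : ∀ a b : ℝ, 0 ≤ a → ContinuousOn f (Set.Icc a b) := by
    intro a b ha y hy
    exact (hdiff y (le_trans ha hy.1)).continuousAt.continuousWithinAt
  have hdo : ∀ a b : ℝ, 0 ≤ a → DifferentiableOn ℝ f (Set.Ioo a b) := by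
    intro a b ha y hy
    exact (hdiff y (le_of_lt (lt_of_le_of_lt ha hy.1))).differentiableWithinAt
  -- MVT on [0, x̄⁰] gives c with f'(c) = r
  obtain ⟨c, hc, hc'⟩ := exists_deriv_eq_slope f hxbar0_pos
    (hcont 0 xbar0 le_rfl) (hdo 0 xbar0 le_rfl)
  have hcr : deriv f c = r := by
    rw [hc'] ; rw [hxbar0, hf0]
    rw [sub_zero, sub_zero, mul_div_assoc, div_self hxbar0_pos.ne', mul_one]
  intro y hy
  -- MVT on [x̄⁰, y]
  obtain ⟨ξ, hξ, hξ'⟩ := exists_deriv_eq_slope f hy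
    (hcont xbar0 y hxbar0_pos.le) (hdo xbar0 y hxbar0_pos.le)
  have hlt : deriv f ξ < r := by
    rw [← hcr]
    exact hconc (le_of_lt hc.1) (le_of_lt (lt_trans hxbar0_pos hξ.1))
      (lt_trans hc.2 hξ.1)
  rw [hξ'] at hlt
  have hd : 0 < y - xbar0 := sub_pos.mpr hy
  rw [div_lt_iff₀ hd] at hlt
  nlinarith [hlt]

/-- If the closed reactor starts at or above the positive day-equilibrium `x̄⁰`
(the unique `x > 0` with `f x = r x`), then the biomass after one day is strictly
smaller than at the start: `x(T) < x(0)`. -/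
theorem closed_reactor_decrease_above_equilibrium
    (f : ℝ → ℝ) (r Tb T xbar0 : ℝ) (x : ℝ → ℝ)
    (hdiff : ∀ y ∈ Set.Ici (0 : ℝ), DifferentiableAt ℝ f y)
    (hderiv_cont : ContinuousOn (deriv f) (Set.Ici (0 : ℝ)))
    (hconc : StrictAntiOn (deriv f) (Set.Ici (0 : ℝ)))
    (hbdd : BddAbove (f '' Set.Ici (0 : ℝ)))
    (hf0 : f 0 = 0)
    (hr : 0 < r)
    (hr' : r < deriv f 0)
    (hxbar0_pos : 0 < xbar0)
    (hxbar0 : f xbar0 = r * xbar0)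
    (hTb : 0 < Tb) (hT : Tb < T)
    (hx_cont : ContinuousOn x (Set.Icc 0 T))
    (hx_pos : ∀ t ∈ Set.Icc (0 : ℝ) T, 0 < x t)
    (hday : ∀ t ∈ Set.Ioo (0 : ℝ) Tb, HasDerivAt x (f (x t) - r * x t) t)
    (hnight : ∀ t ∈ Set.Ioo Tb T, HasDerivAt x (-(r * x t)) t)
    (hinit : xbar0 ≤ x 0) :
    x T < x 0 := by
  have hkey := key_above_equilibrium f r xbar0 hdiff hconc hf0 hxbar0_pos hxbar0
  -- Step 1: during the day the trajectory never exceeds its initial value.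
  have hA : ∀ t ∈ Set.Icc (0 : ℝ) Tb, x t ≤ x 0 := by
    by_contra hcontra
    push_neg at hcontra
    obtain ⟨t₁, ht₁, hx1⟩ := hcontra
    set S : Set ℝ := Set.Icc 0 t₁ ∩ x ⁻¹' Set.Iic (x 0) with hS
    have h0S : (0 : ℝ) ∈ S := ⟨⟨le_rfl, ht₁.1⟩, show x 0 ≤ x 0 from le_rfl⟩
    have hSne : S.Nonempty := ⟨0, h0S⟩
    have hSbdd : BddAbove S := ⟨t₁, fun t ht => ht.1.2⟩
    have hIccT : Set.Icc (0 : ℝ) t₁ ⊆ Set.Icc 0 T := by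
      apply Set.Icc_subset_Icc le_rfl (le_trans ht₁.2 hT.le)
    have hSclosed : IsClosed S := by
      apply ContinuousOn.preimage_isClosed_of_isClosed
        (hx_cont.mono hIccT) isClosed_Icc isClosed_Iic
    set t₀ := sSup S with ht₀def
    have ht₀S : t₀ ∈ S := hSclosed.csSup_mem hSne hSbdd
    have ht₀1 : t₀ < t₁ := by
      rcases lt_or_eq_of_le ht₀S.1.2 with h | h
      · exact h
      · exfalso
        have : x t₀ ≤ x 0 := ht₀S.2
        rw [h] at this
        linarith
    have hmid : ∀ t ∈ Set.Ioc t₀ t₁, x 0 < x t := by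
      intro t ht
      by_contra hle
      push_neg at hle
      have htS : t ∈ S := ⟨⟨le_trans ht₀S.1.1 ht.1.le, ht.2⟩, hle⟩
      have : t ≤ t₀ := le_csSup hSbdd htS
      linarith [ht.1]
    -- MVT on [t₀, t₁]
    have hcont01 : ContinuousOn x (Set.Icc t₀ t₁) := by
      apply hx_cont.mono
      apply Set.Icc_subset_Icc ht₀S.1.1 (le_trans ht₁.2 hT.le)
    have hderiv01 : ∀ t ∈ Set.Ioo t₀ t₁, HasDerivAt x (f (x t) - r * x t) t := by
      intro t ht
      apply hday
      exact ⟨lt_of_le_of_lt ht₀S.1.1 ht.1, lt_of_lt_of_le ht.2 ht₁.2⟩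
    obtain ⟨ξ, hξ, hξ'⟩ := exists_hasDerivAt_eq_slope x
      (fun t => f (x t) - r * x t) ht₀1 hcont01 hderiv01
    have hxξ : x 0 < x ξ := hmid ξ ⟨hξ.1, hξ.2.le⟩
    have hneg : f (x ξ) - r * x ξ < 0 := by
      have := hkey (x ξ) (lt_of_le_of_lt hinit hxξ)
      linarith
    have hpos : 0 < (x t₁ - x t₀) / (t₁ - t₀) := by
      apply div_pos
      · have : x t₀ ≤ x 0 := ht₀S.2
        linarith
      · linarith
    rw [hξ'] at hneg
    linarith
  -- Step 2: the night phase is strictly decreasing.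
  have hAnti : StrictAntiOn x (Set.Icc Tb T) := by
    apply strictAntiOn_of_deriv_neg (convex_Icc Tb T)
    · exact hx_cont.mono (Set.Icc_subset_Icc hTb.le le_rfl)
    · intro t ht
      rw [interior_Icc] at ht
      rw [(hnight t ht).deriv]
      have hxt : 0 < x t := hx_pos t ⟨le_of_lt (lt_trans hTb ht.1), ht.2.le⟩
      nlinarith
  have h1 : x T < x Tb := hAnti ⟨le_rfl, hT.le⟩ ⟨hT.le, le_rfl⟩ hT
  have h2 : x Tb ≤ x 0 := hA Tb ⟨hTb.le, le_rfl⟩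
  linarith
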